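/- Let a, b be real numbers with |a| + |b| > 0, set c := 36000 (|a|+|b|)⁴, define f : ℝ → ℝ by f(J) = -J + 40 J² + c J³, and let J₊ := (-20 + √(400 + c)) / c be the unique positive zero of f. Suppose J : [0,T) → ℝ (with 0 < T ≤ ∞) is differentiable, satisfies J'(t) = f(J(t)) for all t ∈ [0,T), J(0) > J₊, and [0,T) is the maximal interval of existence of this solution. Then J is strictly increasing on [0,T) and sup_{t ∈ [0,T)} J(t) = ∞. -/

import Mathlib

open Set

lemma aux_fpos {c : ℝ} (hc : 0 < c) {Jp x : ℝ}
    (hJp : Jp = (-20 + Real.sqrt (400 + c)) / c) (hx : Jp < x) :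
    0 < -x + 40 * x ^ 2 + c * x ^ 3 := by
  set s := Real.sqrt (400 + c) with hs
  have hs2 : s ^ 2 = 400 + c := Real.sq_sqrt (by linarith)
  have hs0 : 0 ≤ s := Real.sqrt_nonneg _
  have hs20 : 20 < s := by nlinarith
  have hJp0 : 0 < Jp := by rw [hJp]; exact div_pos (by linarith) hc
  have hx0 : 0 < x := hJp0.trans hx
  have hcx : s - 20 < c * x := by
    rw [hJp, div_lt_iff₀ hc] at hx
    nlinarith
  have key : 0 < c ^ 2 * x ^ 2 + 40 * (c * x) - c := by nlinarith [mul_pos (sub_pos.2 hcx) (by nlinarith : (0:ℝ) < c * x + (s - 20))]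
  nlinarith [mul_pos hx0 key]

lemma aux_lip {c q : ℝ} (hc : 0 < c) (hq : 0 < q) {f : ℝ → ℝ}
    (hf : ∀ J, f J = -J + 40 * J ^ 2 + c * J ^ 3) :
    LipschitzOnWith (Real.toNNReal (1 + 80 * q + 3 * c * q ^ 2)) f (Icc (-q) q) := by
  rw [lipschitzOnWith_iff_dist_le_mul]
  intro x hx y hy
  rw [Real.dist_eq, Real.dist_eq, Real.coe_toNNReal _ (by positivity)]
  obtain ⟨hx1, hx2⟩ := hx
  obtain ⟨hy1, hy2⟩ := hy
  have key : f x - f y = (x - y) * (-1 + 40 * (x + y) + c * (x ^ 2 + x * y + y ^ 2)) := by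
    rw [hf, hf]; ring
  rw [key, abs_mul, mul_comm]
  refine mul_le_mul_of_nonneg_right ?_ (abs_nonneg _)
  rw [abs_le]
  have hxx : x ^ 2 ≤ q ^ 2 := by nlinarith
  have hyy : y ^ 2 ≤ q ^ 2 := by nlinarith
  have hxy : x * y ≤ q ^ 2 := by nlinarith [sq_nonneg (x - y)]
  constructor
  · nlinarith [sq_nonneg (x + y), mul_nonneg hc.le (sq_nonneg (x + y))]
  · nlinarith [mul_le_mul_of_nonneg_left hxx hc.le, mul_le_mul_of_nonneg_left hyy hc.le,
      mul_le_mul_of_nonneg_left hxy hc.le]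

lemma aux_bound {c q : ℝ} (hc : 0 < c) (hq : 0 < q) {f : ℝ → ℝ}
    (hf : ∀ J, f J = -J + 40 * J ^ 2 + c * J ^ 3) {x : ℝ} (hx : x ∈ Icc (-q) q) :
    |f x| ≤ q + 40 * q ^ 2 + c * q ^ 3 + 1 := by
  obtain ⟨hx1, hx2⟩ := hx
  have hxx : x ^ 2 ≤ q ^ 2 := by nlinarith
  have hcube : x ^ 3 ≤ q ^ 3 := by nlinarith [sq_nonneg (q + x), sq_nonneg (q - x), sq_nonneg x]
  have hcube' : -q ^ 3 ≤ x ^ 3 := by nlinarith [sq_nonneg (q + x), sq_nonneg (q - x), sq_nonneg x]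
  rw [hf, abs_le]
  constructor
  · nlinarith [mul_le_mul_of_nonneg_left hcube' hc.le]
  · nlinarith [mul_le_mul_of_nonneg_left hcube hc.le]

set_option maxHeartbeats 400000 in
/-- Blow-up for the comparison ODE: if `J` solves `J' = f(J)` on its maximal interval
of existence `[0,T)` (with `0 < T ≤ ∞`) and `J 0 > J₊` (the unique positive zero of
`f J = -J + 40J² + 36000(|a|+|b|)⁴ J³`), then `J` is strictly increasing on `[0,T)`
and `sup_{t ∈ [0,T)} J t = ∞`, i.e. `J` is unbounded above on `[0,T)`. -/
theorem comparison_ode_blowup (a b : ℝ) (hab : 0 < |a| + |b|)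
    (c : ℝ) (hc : c = 36000 * (|a| + |b|) ^ 4)
    (f : ℝ → ℝ) (hf : ∀ J, f J = -J + 40 * J ^ 2 + c * J ^ 3)
    (Jplus : ℝ) (hJplus : Jplus = (-20 + Real.sqrt (400 + c)) / c)
    (T : EReal) (hT : 0 < T)
    (J : ℝ → ℝ)
    (hode : ∀ t : ℝ, 0 ≤ t → (t : EReal) < T →
      HasDerivWithinAt J (f (J t)) {s : ℝ | 0 ≤ s ∧ (s : EReal) < T} t)
    (h0 : Jplus < J 0)
    (hmax : ∀ T' : EReal, T < T' →
      ¬ ∃ K : ℝ → ℝ,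
        (∀ t : ℝ, 0 ≤ t → (t : EReal) < T' →
          HasDerivWithinAt K (f (K t)) {s : ℝ | 0 ≤ s ∧ (s : EReal) < T'} t) ∧
        (∀ t : ℝ, 0 ≤ t → (t : EReal) < T → K t = J t)) :
    StrictMonoOn J {s : ℝ | 0 ≤ s ∧ (s : EReal) < T} ∧
      ¬ BddAbove (J '' {s : ℝ | 0 ≤ s ∧ (s : EReal) < T}) := by
  have hc0 : 0 < c := by rw [hc]; positivity
  set D := {s : ℝ | 0 ≤ s ∧ (s : EReal) < T} with hD
  have hfpos : ∀ x, Jplus < x → 0 < f x := fun x hx => by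
    rw [hf]; exact aux_fpos hc0 hJplus hx
  have h0D : (0 : ℝ) ∈ D := ⟨le_refl 0, by exact_mod_cast hT⟩
  have hcont : ContinuousOn J D := fun t ht => (hode t ht.1 ht.2).continuousWithinAt
  have hconv : Convex ℝ D := by
    rw [convex_iff_ordConnected]
    constructor
    intro x hx y hy z hz
    exact ⟨le_trans hx.1 hz.1, lt_of_le_of_lt (EReal.coe_le_coe_iff.2 hz.2) hy.2⟩
  -- neighborhood fact
  have hnhds : ∀ t : ℝ, 0 < t → (t : EReal) < T → D ∈ nhds t := by
    intro t ht0 htT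
    obtain ⟨z, hz1, hz2⟩ := exists_between htT
    have hzbot : z ≠ ⊥ := fun h => by simp [h] at hz1
    have hztop : z ≠ ⊤ := fun h => by rw [h] at hz2; exact (lt_irrefl _ (hz2.trans_le le_top))
    set u := z.toReal with hu
    have hzu : z = (u : EReal) := (EReal.coe_toReal hztop hzbot).symm
    rw [hzu] at hz1 hz2
    have htu : t < u := EReal.coe_lt_coe_iff.1 hz1
    have : Ioo 0 u ⊆ D := fun s hs => ⟨hs.1.le, lt_trans (EReal.coe_lt_coe_iff.2 hs.2) hz2⟩
    exact Filter.mem_of_superset (Ioo_mem_nhds ht0 htu) this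
  -- derivative at interior points
  have hderiv : ∀ x ∈ interior D, HasDerivAt J (f (J x)) x := by
    intro x hx
    have hxD : x ∈ D := interior_subset hx
    exact (hode x hxD.1 hxD.2).hasDerivAt (mem_interior_iff_mem_nhds.mp hx)
  -- Claim A : J stays above Jplus
  have hgt : ∀ t ∈ D, Jplus < J t := by
    by_contra hcon
    push_neg at hcon
    obtain ⟨t₀, ht₀D, ht₀⟩ := hcon
    have ht₀0 : (0:ℝ) ≤ t₀ := ht₀D.1
    have hIccD : Icc 0 t₀ ⊆ D := fun s hs =>
      ⟨hs.1, lt_of_le_of_lt (EReal.coe_le_coe_iff.2 hs.2) ht₀D.2⟩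
    set S := Icc 0 t₀ ∩ J ⁻¹' (Iic Jplus) with hS
    have hScl : IsClosed S :=
      (hcont.mono hIccD).preimage_isClosed_of_isClosed isClosed_Icc isClosed_Iic
    have hSne : S.Nonempty := ⟨t₀, ⟨ht₀0, le_refl _⟩, ht₀⟩
    have hSbdd : BddBelow S := ⟨0, fun s hs => hs.1.1⟩
    set t₁ := sInf S with ht₁def
    have ht₁S : t₁ ∈ S := hScl.csInf_mem hSne hSbdd
    have ht₁0 : 0 < t₁ := by
      rcases lt_or_eq_of_le ht₁S.1.1 with h | h
      · exact h
      · exfalso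
        have h2 : J t₁ ≤ Jplus := ht₁S.2
        rw [← h] at h2
        exact absurd h2 (not_le.2 h0)
    have habove : ∀ u ∈ Ico 0 t₁, Jplus < J u := by
      intro u hu
      by_contra hle
      exact absurd (csInf_le hSbdd ⟨⟨hu.1, hu.2.le.trans ht₁S.1.2⟩, not_lt.1 hle⟩)
        (not_le.2 hu.2)
    have hmono1 : StrictMonoOn J (Icc 0 t₁) := by
      apply strictMonoOn_of_deriv_pos (convex_Icc 0 t₁)
        (hcont.mono (fun s hs => hIccD ⟨hs.1, hs.2.trans ht₁S.1.2⟩))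
      intro x hx
      rw [interior_Icc] at hx
      have hxD : x ∈ D := hIccD ⟨hx.1.le, hx.2.le.trans ht₁S.1.2⟩
      have hdx : HasDerivAt J (f (J x)) x :=
        (hode x hxD.1 hxD.2).hasDerivAt (hnhds x hx.1 hxD.2)
      rw [hdx.deriv]
      exact hfpos _ (habove x ⟨hx.1.le, hx.2⟩)
    have := hmono1 ⟨le_refl 0, ht₁0.le⟩ ⟨ht₁0.le, le_refl _⟩ ht₁0
    have := ht₁S.2
    simp only [mem_preimage, mem_Iic] at this
    linarith
  have hmono : StrictMonoOn J D := by
    apply strictMonoOn_of_deriv_pos hconv hcont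
    intro x hx
    rw [(hderiv x hx).deriv]
    exact hfpos _ (hgt x (interior_subset hx))
  refine ⟨hmono, ?_⟩
  rintro ⟨M, hM⟩
  have hJle : ∀ t ∈ D, J t ≤ M := fun t ht => hM (mem_image_of_mem J ht)
  set A := J 0 with hA
  have hAle : ∀ t ∈ D, A ≤ J t := fun t ht => by
    rcases eq_or_lt_of_le ht.1 with h | h
    · rw [← h]
    · exact (hmono h0D ht h).le
  have hAM : A ≤ M := hJle 0 h0D
  have hAJp : Jplus < A := h0
  -- continuity of f
  have hfc : Continuous f := by
    have hfe : f = fun x => -x + 40 * x ^ 2 + c * x ^ 3 := funext hf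
    rw [hfe]
    exact (continuous_id.neg.add (continuous_const.mul (continuous_pow 2))).add
      (continuous_const.mul (continuous_pow 3))
  by_cases hTtop : T = ⊤
  · -- infinite time: growth contradiction
    have hDeq : D = Ici 0 := by
      ext s; simp [hD, hTtop, EReal.coe_lt_top]
    obtain ⟨x₀, hx₀mem, hx₀min⟩ :=
      isCompact_Icc.exists_isMinOn (nonempty_Icc.2 hAM) hfc.continuousOn
    set ε := f x₀ with hε
    have hε0 : 0 < ε := hfpos _ (lt_of_lt_of_le hAJp hx₀mem.1)
    set g : ℝ → ℝ := fun t => J t - ε * t with hg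
    have hgd : ∀ x ∈ interior D, HasDerivAt g (f (J x) - ε * 1) x := by
      intro x hx
      exact (hderiv x hx).sub ((hasDerivAt_id x).const_mul ε)
    have hgmono : MonotoneOn g D := by
      apply monotoneOn_of_deriv_nonneg hconv
      · exact hcont.sub ((continuous_const.mul continuous_id).continuousOn)
      · intro x hx
        exact (hgd x hx).differentiableAt.differentiableWithinAt
      · intro x hx
        rw [(hgd x hx).deriv]
        have hxD : x ∈ D := interior_subset hx
        have hmem : J x ∈ Icc A M := ⟨hAle x hxD, hJle x hxD⟩
        have hfx : f x₀ ≤ f (J x) := hx₀min hmem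
        simp only [mul_one]
        linarith
    have hdiv : 0 ≤ (M - A) / ε := div_nonneg (by linarith) hε0.le
    have huD : (M - A) / ε + 1 ∈ D := by
      rw [hDeq]; simp only [mem_Ici]; linarith
    have hkey := hgmono h0D huD (by linarith : (0:ℝ) ≤ (M - A) / ε + 1)
    have hexp : ε * ((M - A) / ε + 1) = (M - A) + ε := by
      field_simp
    have hg0 : g 0 = A := by simp [hg, hA]
    have hgu : g ((M - A) / ε + 1) = J ((M - A) / ε + 1) - ε * ((M - A) / ε + 1) := rfl
    have hJu : J ((M - A) / ε + 1) ≤ M := hJle _ huD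
    rw [hg0, hgu] at hkey
    linarith [hkey, hJu, hexp, hε0]
  · -- finite time: extension contradiction
    have hTne : T ≠ ⊥ := hT.ne_bot
    set τ := T.toReal with hτ
    have hTeq : T = (τ : EReal) := (EReal.coe_toReal hTtop hTne).symm
    have hτ0 : 0 < τ := by
      rw [hTeq] at hT; exact_mod_cast hT
    have hDeq : D = Ico 0 τ := by
      ext s
      simp only [hD, mem_setOf_eq, mem_Ico, hTeq, EReal.coe_lt_coe_iff]
    set R := M - A + 1 with hR
    have hR1 : 1 ≤ R := by linarith
    have habsA := abs_nonneg A
    have habsM := abs_nonneg M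
    set q := |A| + |M| + R with hq
    have hq0 : 0 < q := by linarith
    set B := 1 + 80 * q + 3 * c * q ^ 2 with hB
    set C := q + 40 * q ^ 2 + c * q ^ 3 + 1 with hCdef
    have hC0 : 0 < C := by positivity
    set r := R / (2 * C) with hr
    have hr0 : 0 < r := by positivity
    have hCr : C * r = R / 2 := by
      rw [hr]; field_simp
    set δ := min (r / 2) (τ / 2) with hδ
    have hδ0 : 0 < δ := lt_min (by positivity) (by positivity)
    have hδr : δ < r := (min_le_left _ _).trans_lt (by linarith)
    have hδτ : δ < τ := (min_le_right _ _).trans_lt (by linarith)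
    set t₀ := τ - δ with ht₀def
    have ht₀0 : 0 ≤ t₀ := by
      have := min_le_right (r / 2) (τ / 2)
      simp only [ht₀def]; linarith
    have ht₀τ : t₀ < τ := by simp only [ht₀def]; linarith
    have ht₀D : t₀ ∈ D := by rw [hDeq]; exact ⟨ht₀0, ht₀τ⟩
    set x₀ := J t₀ with hx₀def
    have hx₀mem : x₀ ∈ Icc A M := ⟨hAle _ ht₀D, hJle _ ht₀D⟩
    have hball : Metric.closedBall x₀ R ⊆ Icc (-q) q := by
      rw [Real.closedBall_eq_Icc]
      rintro y ⟨h1, h2⟩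
      have hnA : -|A| ≤ A := neg_abs_le A
      have hMa : M ≤ |M| := le_abs_self M
      exact ⟨by simp only [hq]; linarith [hx₀mem.1], by simp only [hq]; linarith [hx₀mem.2]⟩
    have hIccball : Icc A M ⊆ Metric.closedBall x₀ R := by
      rw [Real.closedBall_eq_Icc]
      rintro y ⟨h1, h2⟩
      constructor
      · have := hx₀mem.2; simp only [hR] at *; linarith
      · have := hx₀mem.1; simp only [hR] at *; linarith
    have hlip : ∀ t : ℝ, LipschitzOnWith (Real.toNNReal B) f (Metric.closedBall x₀ R) :=
      fun _ => (aux_lip hc0 hq0 hf).mono hball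
    have hbnd : ∀ x ∈ Metric.closedBall x₀ R, ‖f x‖ ≤ C := fun x hx => by
      rw [Real.norm_eq_abs]; exact aux_bound hc0 hq0 hf (hball hx)
    have hpl : IsPicardLindelof (fun _ x => f x) (tmin := t₀) (tmax := t₀ + r)
        ⟨t₀, left_mem_Icc.2 (by linarith)⟩ x₀ (Real.toNNReal R) 0 (Real.toNNReal C) (Real.toNNReal B) :=
      { lipschitzOnWith := fun t _ => by rw [Real.coe_toNNReal _ (by linarith)]; exact hlip t
        continuousOn := fun x _ => continuousOn_const
        norm_le := fun t _ x hx => by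
          rw [Real.coe_toNNReal _ (by linarith)] at hx
          rw [Real.coe_toNNReal _ hC0.le]; exact hbnd x hx
        mul_max_le := by
          show (Real.toNNReal C : ℝ) * max (t₀ + r - t₀) (t₀ - t₀) ≤ (Real.toNNReal R : ℝ) - ((0 : NNReal) : ℝ)
          rw [Real.coe_toNNReal _ hC0.le, Real.coe_toNNReal _ (by linarith), NNReal.coe_zero, sub_zero]
          rw [add_sub_cancel_left, sub_self, max_eq_left hr0.le, hCr]
          linarith }
    obtain ⟨σ, hσ0, hσ⟩ := hpl.exists_eq_forall_mem_Icc_hasDerivWithinAt₀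
    replace hσ0 : σ t₀ = x₀ := hσ0
    have hσcont : ContinuousOn σ (Icc t₀ (t₀ + r)) := fun t ht => (hσ t ht).continuousWithinAt
    -- the solution stays in the ball
    have hσball : ∀ t ∈ Icc t₀ (t₀ + r), σ t ∈ Metric.closedBall x₀ R := by
      by_contra hcon
      push_neg at hcon
      obtain ⟨t₂, ht₂, hout⟩ := hcon
      rw [Metric.mem_closedBall, not_le] at hout
      set S' := Icc t₀ (t₀ + r) ∩ (fun w => dist (σ w) x₀) ⁻¹' (Ici R) with hS'
      have hS'cl : IsClosed S' :=
        (((continuous_id.dist continuous_const).comp_continuousOn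
          hσcont).preimage_isClosed_of_isClosed isClosed_Icc isClosed_Ici)
      have hS'ne : S'.Nonempty := ⟨t₂, ht₂, hout.le⟩
      have hS'bdd : BddBelow S' := ⟨t₀, fun s hs => hs.1.1⟩
      set t₁ := sInf S' with ht₁def
      have ht₁S : t₁ ∈ S' := hS'cl.csInf_mem hS'ne hS'bdd
      have hRd : R ≤ dist (σ t₁) x₀ := ht₁S.2
      have ht₀t₁ : t₀ < t₁ := by
        rcases lt_or_eq_of_le ht₁S.1.1 with h | h
        · exact h
        · exfalso
          have hd0 : dist (σ t₀) x₀ = 0 := by rw [hσ0]; simp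
          rw [← h, hd0] at hRd
          linarith
      have hin : ∀ w ∈ Ico t₀ t₁, dist (σ w) x₀ < R := by
        intro w hw
        by_contra hle
        exact absurd (csInf_le hS'bdd ⟨⟨hw.1, hw.2.le.trans ht₁S.1.2⟩, not_lt.1 hle⟩)
          (not_le.2 hw.2)
      have hbound : ∀ w ∈ Ico t₀ t₁, dist (σ w) x₀ ≤ R / 2 := by
        intro w hw
        have hsub : Icc t₀ w ⊆ Icc t₀ (t₀ + r) :=
          Icc_subset_Icc le_rfl (hw.2.le.trans ht₁S.1.2)
        have hderivs : ∀ x ∈ Icc t₀ w, HasDerivWithinAt σ (f (σ x)) (Icc t₀ w) x :=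
          fun x hx => (hσ x (hsub hx)).mono hsub
        have hbnds : ∀ x ∈ Icc t₀ w, ‖f (σ x)‖ ≤ C := by
          intro x hx
          apply hbnd
          rw [Metric.mem_closedBall]
          exact (hin x ⟨hx.1, lt_of_le_of_lt hx.2 hw.2⟩).le
        have hmvt := Convex.norm_image_sub_le_of_norm_hasDerivWithin_le hderivs hbnds
          (convex_Icc t₀ w) (left_mem_Icc.2 hw.1) (right_mem_Icc.2 hw.1)
        have h1 : dist (σ w) x₀ = ‖σ w - σ t₀‖ := by rw [hσ0, dist_eq_norm]
        have h2 : ‖w - t₀‖ ≤ r := by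
          rw [Real.norm_eq_abs, abs_of_nonneg (by linarith [hw.1])]
          have := hw.2.le.trans ht₁S.1.2
          linarith
        calc dist (σ w) x₀ = ‖σ w - σ t₀‖ := h1
          _ ≤ C * ‖w - t₀‖ := hmvt
          _ ≤ C * r := mul_le_mul_of_nonneg_left h2 hC0.le
          _ = R / 2 := hCr
      have hne : (nhdsWithin t₁ (Ioo t₀ t₁)).NeBot := by
        rw [← mem_closure_iff_nhdsWithin_neBot, closure_Ioo (ne_of_lt ht₀t₁)]
        exact ⟨ht₀t₁.le, le_refl _⟩
      have htendσ : Filter.Tendsto σ (nhdsWithin t₁ (Ioo t₀ t₁)) (nhds (σ t₁)) := by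
        have hcw : ContinuousWithinAt σ (Icc t₀ (t₀ + r)) t₁ := (hσ t₁ ht₁S.1).continuousWithinAt
        exact hcw.mono (fun z hz => ⟨hz.1.le, hz.2.le.trans ht₁S.1.2⟩)
      have htend : Filter.Tendsto (fun w => dist (σ w) x₀) (nhdsWithin t₁ (Ioo t₀ t₁))
          (nhds (dist (σ t₁) x₀)) := htendσ.dist tendsto_const_nhds
      have hlim : dist (σ t₁) x₀ ≤ R / 2 :=
        le_of_tendsto htend (Filter.eventually_of_mem self_mem_nhdsWithin
          (fun w hw => hbound w ⟨hw.1.le, hw.2⟩))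
      linarith
    -- uniqueness : J = σ on [t₀, τ)
    have hequ : ∀ u, t₀ ≤ u → u < τ → J u = σ u := by
      intro u hu huτ
      rcases eq_or_lt_of_le hu with h | h
      · rw [← h, hσ0]
      · have huIcc : u ≤ t₀ + r := by
          have : u < t₀ + δ := by rw [ht₀def]; linarith
          linarith
        have hsubD : Icc t₀ u ⊆ D := by
          rw [hDeq]
          exact fun z hz => ⟨le_trans ht₀0 hz.1, lt_of_le_of_lt hz.2 huτ⟩
        have h1 : ContinuousOn J (Icc t₀ u) := hcont.mono hsubD
        have h2 : ∀ t ∈ Ico t₀ u, HasDerivWithinAt J (f (J t)) (Ici t) t := by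
          intro t ht
          have htD : t ∈ D := hsubD ⟨ht.1, ht.2.le⟩
          apply (hode t htD.1 htD.2).mono_of_mem_nhdsWithin
          rw [mem_nhdsWithin]
          refine ⟨Iio τ, isOpen_Iio, lt_trans ht.2 huτ, ?_⟩
          rintro z ⟨hz1, hz2⟩
          rw [hDeq]
          exact ⟨le_trans (le_trans ht₀0 ht.1) hz2, hz1⟩
        have h3 : ∀ t ∈ Ico t₀ u, J t ∈ Metric.closedBall x₀ R := fun t ht =>
          hIccball ⟨hAle _ (hsubD ⟨ht.1, ht.2.le⟩), hJle _ (hsubD ⟨ht.1, ht.2.le⟩)⟩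
        have h4 : ContinuousOn σ (Icc t₀ u) := hσcont.mono (Icc_subset_Icc le_rfl huIcc)
        have h5 : ∀ t ∈ Ico t₀ u, HasDerivWithinAt σ (f (σ t)) (Ici t) t := by
          intro t ht
          apply (hσ t ⟨ht.1, ht.2.le.trans huIcc⟩).mono_of_mem_nhdsWithin
          rw [mem_nhdsWithin]
          refine ⟨Iio (t₀ + r), isOpen_Iio, lt_of_lt_of_le ht.2 huIcc, ?_⟩
          rintro z ⟨hz1, hz2⟩
          exact ⟨le_trans ht.1 hz2, hz1.le⟩
        have h6 : ∀ t ∈ Ico t₀ u, σ t ∈ Metric.closedBall x₀ R := fun t ht =>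
          hσball t ⟨ht.1, ht.2.le.trans huIcc⟩
        have heq := ODE_solution_unique_of_mem_Icc_right
          (v := fun _ x => f x) (s := fun _ => Metric.closedBall x₀ R)
          (fun t _ => hlip t) h1 h2 h3 h4 h5 h6 (by rw [hσ0])
        exact heq (right_mem_Icc.2 hu)
    -- build the extension and contradict maximality
    have hτT' : τ < t₀ + r := by simp only [ht₀def]; linarith
    have hD'eq : {s : ℝ | 0 ≤ s ∧ (s : EReal) < ((t₀ + r : ℝ) : EReal)} = Ico 0 (t₀ + r) := by
      ext s; simp only [mem_setOf_eq, mem_Ico, EReal.coe_lt_coe_iff]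
    apply hmax ((t₀ + r : ℝ) : EReal) (by rw [hTeq]; exact_mod_cast hτT')
    set K : ℝ → ℝ := fun t => if t < τ then J t else σ t with hK
    have hKJ : ∀ s ∈ Iio τ, K s = J s := fun s hs => if_pos hs
    have hKσ : ∀ s ∈ Ioi t₀, K s = σ s := by
      intro s hs
      by_cases h : s < τ
      · rw [hK]; simp only [if_pos h]; exact hequ s (le_of_lt hs) h
      · rw [hK]; simp only [if_neg h]
    refine ⟨K, ?_, fun t ht0 htT => hKJ t (by rw [hTeq] at htT; exact_mod_cast htT)⟩
    intro t ht0 htT'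
    rw [hD'eq]
    have htT'r : t < t₀ + r := by exact_mod_cast htT'
    by_cases htτ : t < τ
    · have htT : (t : EReal) < T := by rw [hTeq]; exact_mod_cast htτ
      have hsetev : D =ᶠ[nhds t] Ico 0 (t₀ + r) := by
        apply Filter.eventuallyEq_set.mpr
        apply Filter.eventually_of_mem (Iio_mem_nhds htτ)
        intro s hs
        rw [hDeq]
        simp only [mem_Ico]
        exact ⟨fun h => ⟨h.1, lt_trans hs hτT'⟩, fun h => ⟨h.1, hs⟩⟩
      have h1 := (hasDerivWithinAt_congr_set hsetev).mp (hode t ht0 htT)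
      have h2 : HasDerivWithinAt K (f (J t)) (Ico 0 (t₀ + r)) t := by
        apply h1.congr_of_eventuallyEq
        · exact Filter.eventually_of_mem (nhdsWithin_le_nhds (Iio_mem_nhds htτ)) hKJ
        · exact hKJ t htτ
      rw [show K t = J t from hKJ t htτ]
      exact h2
    · push_neg at htτ
      have ht₀t : t₀ < t := lt_of_lt_of_le ht₀τ htτ
      have htIcc : t ∈ Icc t₀ (t₀ + r) := ⟨ht₀t.le, htT'r.le⟩
      have hmem : Icc t₀ (t₀ + r) ∈ nhdsWithin t (Ico 0 (t₀ + r)) := by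
        rw [mem_nhdsWithin]
        refine ⟨Ioi t₀, isOpen_Ioi, ht₀t, ?_⟩
        rintro z ⟨hz1, hz2⟩
        exact ⟨le_of_lt hz1, hz2.2.le⟩
      have hbase := (hσ t htIcc).mono_of_mem_nhdsWithin hmem
      have hev : K =ᶠ[nhdsWithin t (Ico 0 (t₀ + r))] σ :=
        Filter.eventually_of_mem (nhdsWithin_le_nhds (Ioi_mem_nhds ht₀t)) hKσ
      have hfin := hbase.congr_of_eventuallyEq hev (hKσ t ht₀t)
      rwa [show K t = σ t from hKσ t ht₀t]
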